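/- For all indices 1 ≤ i < j ≤ n+1, every nonterminal A of G_e, and every u: (A, u) belongs to M(i,j) if and only if u ≤ R, A ⇒* s_i^{j−1} in G_e with a derivation of score u, and there is no u' < u such that A ⇒* s_i^{j−1} in G_e with a derivation of score u'; i.e., M(i,j) consists exactly of the pairs (A,u) where u is the minimum derivation score of s_i^{j−1} from A in G_e and u ≤ R. -/

import Mathlib

/-- A scored production of a grammar: a left-hand-side nonterminal, a right-hand-side
string of nonterminals and terminals, and a score (edit cost). -/
structure ScoredProd (N : Type*) (T : Type*) where
  lhs : N
  rhs : List (N ⊕ T)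
  score : ℕ

/-- `ScoredDerives P u v c` : from the sentential form `u` one can derive the sentential
form `v` using productions from `P` whose scores sum to `c`. -/
inductive ScoredDerives {N T : Type*} (P : Set (ScoredProd N T)) :
    List (N ⊕ T) → List (N ⊕ T) → ℕ → Prop
  | refl (w : List (N ⊕ T)) : ScoredDerives P w w 0
  | step {u l r : List (N ⊕ T)} {p : ScoredProd N T} {c : ℕ} :
      ScoredDerives P u (l ++ [Sum.inl p.lhs] ++ r) c → p ∈ P →
      ScoredDerives P u (l ++ p.rhs ++ r) (c + p.score)

/-- A context-free grammar in Chomsky normal form: binary rules `A → BC`,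
terminal rules `A → a`, and possibly the rule `S → ε` (recorded by `eps`). -/
structure CNF (N : Type*) (T : Type*) where
  start : N
  bin : Set (N × N × N)
  term : Set (N × T)
  eps : Prop

/-- The productions of the CNF grammar `G`, all of score `0`. -/
def CNF.prods {N T : Type*} (G : CNF N T) : Set (ScoredProd N T) :=
  {p | (∃ A B C, (A, B, C) ∈ G.bin ∧ p = ⟨A, [Sum.inl B, Sum.inl C], 0⟩) ∨
       (∃ A a, (A, a) ∈ G.term ∧ p = ⟨A, [Sum.inr a], 0⟩) ∨
       (G.eps ∧ p = ⟨G.start, [], 0⟩)}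

/-- Lift a production of `G` to the augmented grammar `G_e`, whose nonterminals are
`N ⊕ Unit` (with `Sum.inr ()` playing the role of the fresh nonterminal `I`). -/
def liftProd {N T : Type*} (p : ScoredProd N T) : ScoredProd (N ⊕ Unit) T :=
  ⟨Sum.inl p.lhs, p.rhs.map (Sum.map Sum.inl id), p.score⟩

/-- The productions of the augmented grammar `G_e`: the original productions of `G`
(score 0), elementary substitution rules `A → y` of score 1 (for `A` having some
terminal rule and `y` with `A → y ∉ P`), elementary insertion rules `I → x` of score 1,
rules `A → IA`, `A → AI` of score 0, `I → II` of score 0, and elementary deletion rules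
`A → ε` of score 1 for every terminal rule `A → x` of `G`. -/
def CNF.augProds {N T : Type*} (G : CNF N T) : Set (ScoredProd (N ⊕ Unit) T) :=
  (liftProd '' G.prods) ∪
  {p | ∃ A y, (∃ x, (A, x) ∈ G.term) ∧ (A, y) ∉ G.term ∧
        p = ⟨Sum.inl A, [Sum.inr y], 1⟩} ∪
  {p | ∃ x, p = ⟨Sum.inr (), [Sum.inr x], 1⟩} ∪
  {p | ∃ A : N, p = ⟨Sum.inl A, [Sum.inl (Sum.inr ()), Sum.inl (Sum.inl A)], 0⟩ ∨
                p = ⟨Sum.inl A, [Sum.inl (Sum.inl A), Sum.inl (Sum.inr ())], 0⟩} ∪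
  {(⟨Sum.inr (), [Sum.inl (Sum.inr ()), Sum.inl (Sum.inr ())], 0⟩ : ScoredProd (N ⊕ Unit) T)} ∪
  {p | ∃ A x, (A, x) ∈ G.term ∧ p = ⟨Sum.inl A, [], 1⟩}

/-- `A ⇒* s` in the grammar `G`. -/
def CNF.Derives {N T : Type*} (G : CNF N T) (A : N) (s : List T) : Prop :=
  ∃ u, ScoredDerives G.prods [Sum.inl A] (s.map Sum.inr) u

/-- The language of `G`. -/
def CNF.lang {N T : Type*} (G : CNF N T) : Set (List T) := {s | G.Derives G.start s}

/-- `A ⇒* s` in the augmented grammar `G_e` with a derivation of score exactly `u`. -/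
def CNF.augDerives {N T : Type*} (G : CNF N T) (A : N ⊕ Unit) (s : List T) (u : ℕ) : Prop :=
  ScoredDerives G.augProds [Sum.inl A] (s.map Sum.inr) u

/-- Cost structure for the Levenshtein distance (as in the former Mathlib file
`Mathlib/Data/List/EditDistance/Defs.lean`, since removed). -/
structure Levenshtein.Cost (α β δ : Type*) where
  delete : α → δ
  insert : β → δ
  substitute : α → β → δ

/-- The default unit cost. -/
def Levenshtein.defaultCost {α : Type*} [DecidableEq α] : Levenshtein.Cost α α ℕ where
  delete _ := 1
  insert _ := 1
  substitute a b := if a = b then 0 else 1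

/-- Auxiliary step of the Levenshtein dynamic programme (former Mathlib definition). -/
def Levenshtein.impl {α β δ : Type*} [AddZeroClass δ] [Min δ] (C : Levenshtein.Cost α β δ)
    (xs : List α) (y : β) (d : {r : List δ // 0 < r.length}) : {r : List δ // 0 < r.length} :=
  let ⟨ds, w⟩ := d
  xs.zip (ds.zip ds.tail) |>.foldr
    (init := ⟨[ds.getLast (List.length_pos_iff.mp w) + C.insert y], by simp⟩)
    (fun ⟨x, d₀, d₁⟩ ⟨r, w⟩ =>
      ⟨min (C.delete x + r[0]) (min (C.insert y + d₀) (C.substitute x y + d₁)) :: r, by simp⟩)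

/-- Levenshtein distances of all suffixes of `xs` to `ys` (former Mathlib definition). -/
def suffixLevenshtein {α β δ : Type*} [AddZeroClass δ] [Min δ] (C : Levenshtein.Cost α β δ)
    (xs : List α) (ys : List β) : {r : List δ // 0 < r.length} :=
  ys.foldr
    (Levenshtein.impl C xs)
    (xs.foldr (init := ⟨[0], by simp⟩) (fun a ⟨r, w⟩ => ⟨(C.delete a + r[0]) :: r, by simp⟩))

/-- The Levenshtein distance (former Mathlib definition). -/
def levenshtein {α β δ : Type*} [AddZeroClass δ] [Min δ] (C : Levenshtein.Cost α β δ)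
    (xs : List α) (ys : List β) : δ :=
  let ⟨r, _⟩ := suffixLevenshtein C xs ys
  r[0]

/-- The standard (unit-cost) string edit distance. -/
def editDist {T : Type*} [DecidableEq T] (s t : List T) : ℕ :=
  levenshtein Levenshtein.defaultCost s t

/-- The language edit distance `d_G(G,s) = min_{z ∈ L(G)} d_ed(s,z)`. -/
noncomputable def dG {N T : Type*} [DecidableEq T] (G : CNF N T) (s : List T) : ℕ :=
  sInf {d | ∃ z ∈ G.lang, editDist s z = d}


/-- The substring `s_i^{j-1} = s_i s_{i+1} ... s_{j-1}` (1-based indices). -/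
def subStr {T : Type*} (s : List T) (i j : ℕ) : List T := (s.drop (i - 1)).take (j - i)

/-- The candidate entries generated by the construction of the matrix `M`:
(base) `(A, σ) ∈ M(i, i+1)` whenever `A → s_i` is a production of `G_e` of score `σ`;
(combination) if `(B,u) ∈ M(i,j)`, `(C,v) ∈ M(j,k)` and `A → BC` is a production of `G_e`,
then `(A, u+v)` is a candidate for `M(i,k)`;
(ε-absorption) if `(B,u) ∈ M(i,j)`, `A → CB` (resp. `A → BC`) is a production of `G_e`, and
`C ⇒* ε` in `G_e` with a derivation of score `v`, then `(A, u+v)` is a candidate for `M(i,j)`. -/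
inductive Cand {N T : Type*} (G : CNF N T) (s : List T) :
    ℕ → ℕ → (N ⊕ Unit) → ℕ → Prop
  | base {i : ℕ} {A : N ⊕ Unit} {σ : ℕ} {a : T} :
      1 ≤ i → i ≤ s.length → s[i - 1]? = some a →
      (⟨A, [Sum.inr a], σ⟩ : ScoredProd (N ⊕ Unit) T) ∈ G.augProds →
      Cand G s i (i + 1) A σ
  | comb {i j k : ℕ} {A B C : N ⊕ Unit} {u v sc : ℕ} :
      Cand G s i j B u → Cand G s j k C v →
      (⟨A, [Sum.inl B, Sum.inl C], sc⟩ : ScoredProd (N ⊕ Unit) T) ∈ G.augProds →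
      Cand G s i k A (u + v)
  | epsL {i j : ℕ} {A B C : N ⊕ Unit} {u v sc : ℕ} :
      Cand G s i j B u →
      (⟨A, [Sum.inl C, Sum.inl B], sc⟩ : ScoredProd (N ⊕ Unit) T) ∈ G.augProds →
      ScoredDerives G.augProds [Sum.inl C] [] v →
      Cand G s i j A (u + v)
  | epsR {i j : ℕ} {A B C : N ⊕ Unit} {u v sc : ℕ} :
      Cand G s i j B u →
      (⟨A, [Sum.inl B, Sum.inl C], sc⟩ : ScoredProd (N ⊕ Unit) T) ∈ G.augProds →
      ScoredDerives G.augProds [Sum.inl C] [] v →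
      Cand G s i j A (u + v)

/-- The entry `M(i,j)` of the matrix `M`: among all candidates, for each nonterminal only
the pair of minimum score is kept, and pairs of score exceeding `R` are discarded. -/
def Mmat {N T : Type*} (G : CNF N T) (s : List T) (R i j : ℕ) : Set ((N ⊕ Unit) × ℕ) :=
  {q | Cand G s i j q.1 q.2 ∧ q.2 ≤ R ∧ ∀ v, Cand G s i j q.1 v → q.2 ≤ v}

section Aux

variable {N T : Type*}

theorem ScoredDerives.cast {P : Set (ScoredProd N T)} {a b : List (N ⊕ T)} {u v : ℕ}
    (h : ScoredDerives P a b u) (e : u = v) : ScoredDerives P a b v := e ▸ h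

theorem ScoredDerives.trans {P : Set (ScoredProd N T)} {a b c : List (N ⊕ T)} {u v : ℕ}
    (h1 : ScoredDerives P a b u) (h2 : ScoredDerives P b c v) :
    ScoredDerives P a c (u + v) := by
  induction h2 with
  | refl => simpa using h1
  | step h hp ih => exact (ScoredDerives.step ih hp).cast (by omega)

theorem ScoredDerives.single {P : Set (ScoredProd N T)} {p : ScoredProd N T}
    (hp : p ∈ P) (l r : List (N ⊕ T)) :
    ScoredDerives P (l ++ [Sum.inl p.lhs] ++ r) (l ++ p.rhs ++ r) p.score := by
  simpa using ScoredDerives.step (ScoredDerives.refl (l ++ [Sum.inl p.lhs] ++ r)) hp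

theorem ScoredDerives.context {P : Set (ScoredProd N T)} {a b : List (N ⊕ T)} {u : ℕ}
    (x y : List (N ⊕ T)) (h : ScoredDerives P a b u) :
    ScoredDerives P (x ++ a ++ y) (x ++ b ++ y) u := by
  induction h with
  | refl => exact .refl _
  | @step l r p c h hp ih =>
    have h2 : ScoredDerives P (x ++ a ++ y) ((x ++ l) ++ [Sum.inl p.lhs] ++ (r ++ y)) c := by
      simpa [List.append_assoc] using ih
    simpa [List.append_assoc] using ScoredDerives.step h2 hp

/-- Head-recursive, step-counting variant of `ScoredDerives`. -/
inductive DerN (P : Set (ScoredProd N T)) :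
    List (N ⊕ T) → List (N ⊕ T) → ℕ → ℕ → Prop
  | refl (w : List (N ⊕ T)) : DerN P w w 0 0
  | head {l r v : List (N ⊕ T)} {p : ScoredProd N T} {c n : ℕ} :
      p ∈ P → DerN P (l ++ p.rhs ++ r) v c n →
      DerN P (l ++ [Sum.inl p.lhs] ++ r) v (p.score + c) (n + 1)

theorem DerN.cast {P : Set (ScoredProd N T)} {a b : List (N ⊕ T)} {u v n : ℕ}
    (h : DerN P a b u n) (e : u = v) : DerN P a b v n := e ▸ h

theorem DerN.toScored {P : Set (ScoredProd N T)} {a b : List (N ⊕ T)} {u n : ℕ}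
    (h : DerN P a b u n) : ScoredDerives P a b u := by
  induction h with
  | refl => exact .refl _
  | head hp h ih => exact (ScoredDerives.single hp _ _).trans ih

theorem DerN.snoc {P : Set (ScoredProd N T)} :
    ∀ {a w : List (N ⊕ T)} {c n : ℕ}, DerN P a w c n →
      ∀ {l r : List (N ⊕ T)} {p : ScoredProd N T}, w = l ++ [Sum.inl p.lhs] ++ r → p ∈ P →
      DerN P a (l ++ p.rhs ++ r) (c + p.score) (n + 1) := by
  intro a w c n h
  induction h with
  | refl =>
    intro l r p hw hp
    subst hw
    exact (DerN.head hp (DerN.refl _)).cast (by omega)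
  | head hq h ih =>
    intro l r p hw hp
    exact (DerN.head hq (ih hw hp)).cast (by omega)

theorem ScoredDerives.toDerN {P : Set (ScoredProd N T)} {a b : List (N ⊕ T)} {u : ℕ}
    (h : ScoredDerives P a b u) : ∃ n, DerN P a b u n := by
  induction h with
  | refl => exact ⟨0, .refl _⟩
  | step h hp ih => obtain ⟨n, hn⟩ := ih; exact ⟨n + 1, hn.snoc rfl hp⟩

theorem DerN.eq_of_terminal {P : Set (ScoredProd N T)} {w v : List (N ⊕ T)} {c n : ℕ}
    (hw : ∀ x ∈ w, ∃ a, x = Sum.inr a) (h : DerN P w v c n) : v = w ∧ c = 0 := by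
  cases h with
  | refl => exact ⟨rfl, rfl⟩
  | @head l r v p c' n' hp h =>
    obtain ⟨a, ha⟩ := hw (Sum.inl p.lhs) (by simp)
    simp at ha

theorem DerN.split {P : Set (ScoredProd N T)} :
    ∀ {a v : List (N ⊕ T)} {c n : ℕ}, DerN P a v c n →
      ∀ {x y : List (N ⊕ T)}, a = x ++ y →
      ∃ v1 v2 c1 c2 n1 n2, v = v1 ++ v2 ∧ c = c1 + c2 ∧ n = n1 + n2 ∧
        DerN P x v1 c1 n1 ∧ DerN P y v2 c2 n2 := by
  intro a v c n h
  induction h with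
  | refl w =>
    intro x y hxy
    exact ⟨x, y, 0, 0, 0, 0, hxy, rfl, rfl, .refl _, .refl _⟩
  | @head l r v p c n hp h ih =>
    intro x y hxy
    have hxy' : x ++ y = l ++ ([Sum.inl p.lhs] ++ r) := by
      rw [← hxy]; simp [List.append_assoc]
    rcases List.append_eq_append_iff.mp hxy' with ⟨t, hl, hy⟩ | ⟨t, hx, ht⟩
    · -- l = x ++ t, y = t ++ [inl p.lhs] ++ r
      obtain ⟨v1, v2, c1, c2, n1, n2, hv, hc, hn, h1, h2⟩ :=
        ih (x := x) (y := t ++ p.rhs ++ r) (by rw [hl]; simp [List.append_assoc])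
      refine ⟨v1, v2, c1, p.score + c2, n1, n2 + 1, hv, by omega, by omega, h1, ?_⟩
      have := DerN.head (l := t) (r := r) hp h2
      simpa [hy, List.append_assoc] using this
    · -- x = l ++ t, [inl p.lhs] ++ r = t ++ y
      cases t with
      | nil =>
        simp only [List.append_nil] at hx
        simp only [List.nil_append, List.singleton_append] at ht
        subst ht
        obtain ⟨v1, v2, c1, c2, n1, n2, hv, hc, hn, h1, h2⟩ :=
          ih (x := x) (y := p.rhs ++ r) (by rw [hx]; simp [List.append_assoc])
        refine ⟨v1, v2, c1, p.score + c2, n1, n2 + 1, hv, by omega, by omega, h1, ?_⟩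
        have := DerN.head (l := ([] : List (N ⊕ T))) (r := r) hp h2
        simpa using this
      | cons A' t' =>
        simp only [List.cons_append, List.singleton_append, List.cons.injEq,
          List.nil_append] at ht
        obtain ⟨hA1, hr⟩ := ht
        subst hA1
        obtain ⟨v1, v2, c1, c2, n1, n2, hv, hc, hn, h1, h2⟩ :=
          ih (x := l ++ p.rhs ++ t') (y := y) (by rw [hr]; simp [List.append_assoc])
        refine ⟨v1, v2, p.score + c1, c2, n1 + 1, n2, hv, by omega, by omega, ?_, h2⟩
        have := DerN.head (l := l) (r := t') hp h1
        simpa [hx, List.append_assoc] using this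

theorem prods_score_eq_zero {G : CNF N T} {p : ScoredProd N T} (hp : p ∈ G.prods) :
    p.score = 0 := by
  rcases hp with ⟨A, B, C, _, rfl⟩ | ⟨A, a, _, rfl⟩ | ⟨_, rfl⟩ <;> rfl

theorem augProds_rhs_shape {G : CNF N T} {p : ScoredProd (N ⊕ Unit) T}
    (hp : p ∈ G.augProds) :
    (∃ B C, p.rhs = [Sum.inl B, Sum.inl C]) ∨ (∃ a, p.rhs = [Sum.inr a]) ∨ p.rhs = [] := by
  rcases hp with ((((⟨q, hq, rfl⟩ | ⟨A, y, _, _, rfl⟩) | ⟨x, rfl⟩) | ⟨A, rfl | rfl⟩) | hp) | ⟨A, x, _, rfl⟩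
  · rcases hq with ⟨A, B, C, _, rfl⟩ | ⟨A, a, _, rfl⟩ | ⟨_, rfl⟩
    · exact Or.inl ⟨Sum.inl B, Sum.inl C, rfl⟩
    · exact Or.inr (Or.inl ⟨a, rfl⟩)
    · exact Or.inr (Or.inr rfl)
  · exact Or.inr (Or.inl ⟨y, rfl⟩)
  · exact Or.inr (Or.inl ⟨x, rfl⟩)
  · exact Or.inl ⟨_, _, rfl⟩
  · exact Or.inl ⟨_, _, rfl⟩
  · rw [Set.mem_singleton_iff] at hp
    subst hp
    exact Or.inl ⟨_, _, rfl⟩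
  · exact Or.inr (Or.inr rfl)

theorem augProds_bin_score {G : CNF N T} {A B C : N ⊕ Unit} {sc : ℕ}
    (hp : (⟨A, [Sum.inl B, Sum.inl C], sc⟩ : ScoredProd (N ⊕ Unit) T) ∈ G.augProds) :
    sc = 0 := by
  rcases hp with ((((⟨q, hq, hq2⟩ | ⟨A', y, _, _, he⟩) | ⟨x, he⟩) | ⟨A', he | he⟩) | hp) | ⟨A', x, _, he⟩
  · have := prods_score_eq_zero hq
    have := congrArg ScoredProd.score hq2
    simp [liftProd] at this
    omega
  · exact absurd (congrArg ScoredProd.rhs he) (by simp)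
  · exact absurd (congrArg ScoredProd.rhs he) (by simp)
  · exact congrArg ScoredProd.score he
  · exact congrArg ScoredProd.score he
  · rw [Set.mem_singleton_iff] at hp
    exact congrArg ScoredProd.score hp
  · exact absurd (congrArg ScoredProd.rhs he) (by simp)

theorem subStr_length {s : List T} {i j : ℕ} (hi : 1 ≤ i) (hij : i ≤ j)
    (hj : j ≤ s.length + 1) : (subStr s i j).length = j - i := by
  simp only [subStr, List.length_take, List.length_drop]
  omega

theorem subStr_append {s : List T} {i j k : ℕ} (hi : 1 ≤ i) (h1 : i ≤ j) (h2 : j ≤ k) :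
    subStr s i j ++ subStr s j k = subStr s i k := by
  unfold subStr
  rw [show k - i = (j - i) + (k - j) by omega, List.take_add]
  congr 1
  rw [List.drop_drop, show i - 1 + (j - i) = j - 1 by omega]

theorem Cand.sound {G : CNF N T} {s : List T} {i j : ℕ} {A : N ⊕ Unit} {u : ℕ}
    (h : Cand G s i j A u) : 1 ≤ i ∧ i < j ∧ G.augDerives A (subStr s i j) u := by
  induction h with
  | @base i A σ a h1 h2 ha hp =>
    refine ⟨h1, by omega, ?_⟩
    have hsub : subStr s i (i + 1) = [a] := by
      have hlt : i - 1 < s.length := by omega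
      have : s.drop (i - 1) = s[i-1] :: s.drop (i - 1 + 1) := List.drop_eq_getElem_cons hlt
      simp only [subStr, show i + 1 - i = 1 by omega, this, List.take_succ_cons, List.take_zero]
      have : s[i-1] = a := by
        have := ha
        rw [List.getElem?_eq_getElem hlt] at this
        exact Option.some.injEq _ _ ▸ (by simpa using this)
      rw [this]
    rw [hsub]
    show ScoredDerives _ [Sum.inl A] ([Sum.inr a]) σ
    have := ScoredDerives.single hp [] []
    simpa using this
  | @comb i j k A B C u v sc h1 h2 hp ih1 ih2 =>
    obtain ⟨hi1, hij1, hd1⟩ := ih1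
    obtain ⟨hj1, hjk1, hd2⟩ := ih2
    refine ⟨hi1, by omega, ?_⟩
    have hsc := augProds_bin_score hp
    subst hsc
    have step1 : ScoredDerives G.augProds [Sum.inl A] [Sum.inl B, Sum.inl C] 0 := by
      have := ScoredDerives.single hp [] []
      simpa using this
    have step2 : ScoredDerives G.augProds [Sum.inl B, Sum.inl C]
        ((subStr s i j).map Sum.inr ++ [Sum.inl C]) u := by
      have := ScoredDerives.context (x := []) (y := [Sum.inl C]) hd1
      simpa using this
    have step3 : ScoredDerives G.augProds ((subStr s i j).map Sum.inr ++ [Sum.inl C])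
        ((subStr s i j).map Sum.inr ++ (subStr s j k).map Sum.inr) v := by
      have := ScoredDerives.context (x := (subStr s i j).map Sum.inr) (y := []) hd2
      simpa using this
    have : ScoredDerives G.augProds [Sum.inl A]
        ((subStr s i j).map Sum.inr ++ (subStr s j k).map Sum.inr) (u + v) :=
      ((step1.trans step2).trans step3).cast (by omega)
    show ScoredDerives _ _ ((subStr s i k).map Sum.inr) _
    rw [← subStr_append hi1 (le_of_lt hij1) (le_of_lt hjk1), List.map_append]
    exact this
  | @epsL i j A B C u v sc h1 hp heps ih =>
    obtain ⟨hi1, hij1, hd1⟩ := ih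
    refine ⟨hi1, hij1, ?_⟩
    have hsc := augProds_bin_score hp
    subst hsc
    have step1 : ScoredDerives G.augProds [Sum.inl A] [Sum.inl C, Sum.inl B] 0 := by
      have := ScoredDerives.single hp [] []
      simpa using this
    have step2 : ScoredDerives G.augProds [Sum.inl C, Sum.inl B] [Sum.inl B] v := by
      have := ScoredDerives.context (x := []) (y := [Sum.inl B]) heps
      simpa using this
    exact ((step1.trans step2).trans hd1).cast (by omega)
  | @epsR i j A B C u v sc h1 hp heps ih =>
    obtain ⟨hi1, hij1, hd1⟩ := ih
    refine ⟨hi1, hij1, ?_⟩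
    have hsc := augProds_bin_score hp
    subst hsc
    have step1 : ScoredDerives G.augProds [Sum.inl A] [Sum.inl B, Sum.inl C] 0 := by
      have := ScoredDerives.single hp [] []
      simpa using this
    have step2 : ScoredDerives G.augProds [Sum.inl B, Sum.inl C] [Sum.inl B] v := by
      have := ScoredDerives.context (x := [Sum.inl B]) (y := []) heps
      simpa using this
    exact ((step1.trans step2).trans hd1).cast (by omega)

theorem DerN.complete {G : CNF N T} {s : List T} :
    ∀ n : ℕ, ∀ {c i j : ℕ} {A : N ⊕ Unit}, 1 ≤ i → i < j → j ≤ s.length + 1 →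
      DerN G.augProds [Sum.inl A] ((subStr s i j).map Sum.inr) c n →
      ∃ c' ≤ c, Cand G s i j A c' := by
  intro n
  induction n using Nat.strong_induction_on with
  | _ n ih =>
  intro c i j A hi hij hj h
  have hlen : (subStr s i j).length = j - i := subStr_length hi (le_of_lt hij) hj
  generalize hw : (List.map Sum.inr (subStr s i j) : List ((N ⊕ Unit) ⊕ T)) = w at h
  generalize hu : ([Sum.inl A] : List ((N ⊕ Unit) ⊕ T)) = u0 at h
  cases h with
  | refl =>
    -- hw : map inr (subStr s i j) = [inl A]
    exfalso
    rw [← hu] at hw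
    cases hsub : subStr s i j <;> simp [hsub] at hw
  | @head l r v p c' n' hp h =>
    subst hw
    -- hu : [inl A] = l ++ [inl p.lhs] ++ r
    obtain ⟨pl, pr, ps⟩ := p
    have hlr : l = [] ∧ r = [] ∧ pl = A := by
      cases l with
      | nil =>
        simp only [List.nil_append, List.singleton_append, List.cons.injEq] at hu
        obtain ⟨h1, h2⟩ := hu
        exact ⟨rfl, h2.symm, by injection h1.symm⟩
      | cons x l' =>
        exfalso
        have := congrArg List.length hu
        simp [List.length_append] at this
    obtain ⟨rfl, rfl, rfl⟩ := hlr
    simp only [List.nil_append, List.append_nil] at h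
    rcases augProds_rhs_shape hp with ⟨B, C, hrhs⟩ | ⟨a, hrhs⟩ | hrhs <;>
      simp only at hrhs <;> subst hrhs
    · -- binary rule
      obtain ⟨v1, v2, c1, c2, n1, n2, hv, hc, hn, h1, h2⟩ :=
        h.split (x := [Sum.inl B]) (y := [Sum.inl C]) rfl
      obtain ⟨t1, t2, ht, hm1, hm2⟩ := List.map_eq_append_iff.mp hv
      set k := i + t1.length with hk
      have hlen2 : t1.length + t2.length = j - i := by
        have := congrArg List.length ht
        simp at this
        omega
      have hkj : k ≤ j := by omega
      have ht1 : t1 = subStr s i k := by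
        have e1 : t1 = (subStr s i j).take t1.length := by
          rw [ht, List.take_left]
        rw [e1]
        simp only [subStr]
        rw [List.take_take, show k - i = t1.length by omega,
          show t1.length ⊓ (j - i) = t1.length by omega]
      have ht2 : t2 = subStr s k j := by
        have e1 : t2 = (subStr s i j).drop t1.length := by
          rw [ht, List.drop_left]
        rw [e1]
        simp only [subStr]
        rw [List.drop_take, List.drop_drop,
          show i - 1 + t1.length = k - 1 by omega,
          show j - i - t1.length = j - k by omega]
      rcases Nat.eq_zero_or_pos t1.length with h0 | hpos1
      · -- t1 empty: ε-absorption on the left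
        have ht1e : t1 = [] := List.length_eq_zero_iff.mp h0
        have hkeq : k = i := by omega
        rw [ht1e] at hm1
        have heps : ScoredDerives G.augProds [Sum.inl B] [] c1 := by
          have := h1.toScored
          rw [← hm1] at this
          simpa using this
        have hsub2 : subStr s i j = t2 := by rw [ht, ht1e, List.nil_append]
        have h2' : DerN G.augProds [Sum.inl C] ((subStr s i j).map Sum.inr) c2 n2 := by
          rw [hsub2, hm2]
          exact h2
        obtain ⟨c2', hle, hcand⟩ := ih n2 (by omega) hi hij hj h2'
        exact ⟨c2' + c1, by omega, Cand.epsL hcand hp heps⟩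
      rcases Nat.eq_zero_or_pos t2.length with h0 | hpos2
      · -- t2 empty: ε-absorption on the right
        have ht2e : t2 = [] := List.length_eq_zero_iff.mp h0
        have hkeq : k = j := by omega
        rw [ht2e] at hm2
        have heps : ScoredDerives G.augProds [Sum.inl C] [] c2 := by
          have := h2.toScored
          rw [← hm2] at this
          simpa using this
        have hsub1 : subStr s i j = t1 := by rw [ht, ht2e, List.append_nil]
        have h1' : DerN G.augProds [Sum.inl B] ((subStr s i j).map Sum.inr) c1 n1 := by
          rw [hsub1, hm1]
          exact h1
        obtain ⟨c1', hle, hcand⟩ := ih n1 (by omega) hi hij hj h1'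
        exact ⟨c1' + c2, by omega, Cand.epsR hcand hp heps⟩
      · -- both nonempty: combination
        have hik : i < k := by omega
        have hkj' : k < j := by omega
        have h1' : DerN G.augProds [Sum.inl B] ((subStr s i k).map Sum.inr) c1 n1 := by
          rw [← ht1, hm1]; exact h1
        have h2' : DerN G.augProds [Sum.inl C] ((subStr s k j).map Sum.inr) c2 n2 := by
          rw [← ht2, hm2]; exact h2
        obtain ⟨c1', hle1, hcand1⟩ := ih n1 (by omega) hi hik (by omega) h1'
        obtain ⟨c2', hle2, hcand2⟩ := ih n2 (by omega) (by omega) hkj' hj h2'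
        exact ⟨c1' + c2', by omega, Cand.comb hcand1 hcand2 hp⟩
    · -- terminal rule
      obtain ⟨hv, hc0⟩ := h.eq_of_terminal (by rintro x hx; simp at hx; exact ⟨a, hx⟩)
      have ht : subStr s i j = [a] := by
        have := hv
        cases hsub : subStr s i j with
        | nil => rw [hsub] at this; simp at this
        | cons b t' =>
          rw [hsub] at this
          simp only [List.map_cons, List.cons.injEq] at this
          obtain ⟨hb, ht'⟩ := this
          have : t' = [] := by
            cases t' with
            | nil => rfl
            | cons => simp at ht'
          injection hb with hb
          rw [this, hb]
      have hj1 : j = i + 1 := by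
        have := congrArg List.length ht
        rw [hlen] at this
        simp at this
        omega
      have hget : s[i - 1]? = some a := by
        have : (subStr s i j)[0]? = some a := by rw [ht]; rfl
        simp only [subStr] at this
        rw [List.getElem?_take, List.getElem?_drop] at this
        simp only [show 0 < j - i by omega, if_true] at this
        simpa using this
      have hile : i ≤ s.length := by omega
      refine ⟨ps, Nat.le_add_right ps _, ?_⟩
      rw [hj1]
      exact Cand.base hi hile hget hp
    · -- empty rule: impossible
      exfalso
      obtain ⟨hv, _⟩ := h.eq_of_terminal (by rintro x hx; simp at hx)
      have := congrArg List.length hv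
      simp [hlen] at this
      omega

theorem augDerives_exists_cand {G : CNF N T} {s : List T} {i j : ℕ} {A : N ⊕ Unit} {c : ℕ}
    (hi : 1 ≤ i) (hij : i < j) (hj : j ≤ s.length + 1)
    (h : G.augDerives A (subStr s i j) c) : ∃ c' ≤ c, Cand G s i j A c' := by
  obtain ⟨n, hn⟩ := h.toDerN
  exact DerN.complete n hi hij hj hn

end Aux

/-- For all `1 ≤ i < j ≤ n+1`, every nonterminal `A` of `G_e` and every `u`:
`(A, u) ∈ M(i,j)` iff `u ≤ R`, `A ⇒* s_i^{j-1}` in `G_e` with a derivation of score `u`,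
and there is no `u' < u` with a derivation `A ⇒* s_i^{j-1}` of score `u'` in `G_e`. -/
theorem Mmat_mem_iff_min_score {N T : Type*} [DecidableEq T]
    (G : CNF N T) (hne : G.lang.Nonempty) (s : List T) (R : ℕ) (hR : 1 ≤ R)
    (i j : ℕ) (hi : 1 ≤ i) (hij : i < j) (hj : j ≤ s.length + 1)
    (A : N ⊕ Unit) (u : ℕ) :
    (A, u) ∈ Mmat G s R i j ↔
      (u ≤ R ∧ G.augDerives A (subStr s i j) u ∧
        ∀ u' < u, ¬ G.augDerives A (subStr s i j) u') := by
  constructor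
  · rintro ⟨hc, hle, hmin⟩
    obtain ⟨-, -, hd⟩ := hc.sound
    refine ⟨hle, hd, ?_⟩
    intro u' hu' hd'
    obtain ⟨c', hc'le, hcand⟩ := augDerives_exists_cand hi hij hj hd'
    have := hmin c' hcand
    omega
  · rintro ⟨hle, hd, hmin⟩
    obtain ⟨c', hc'le, hcand⟩ := augDerives_exists_cand hi hij hj hd
    obtain ⟨-, -, hd'⟩ := hcand.sound
    have hcu : c' = u := by
      rcases lt_or_eq_of_le hc'le with h | h
      · exact absurd hd' (hmin c' h)
      · exact h
    subst hcu
    refine ⟨hcand, hle, ?_⟩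
    intro v hv
    obtain ⟨-, -, hdv⟩ := hv.sound
    by_contra hlt
    exact hmin v (by omega) hdv
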